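/- Update delta for safe generators: Let m be a pattern query, R a node with ⟦m(R)⟧ = (⊤, Γ₀) for some scope Γ₀, and g a generator that is safe for (m, R) with attribute scope Γ and node scope μ. Assume every node occurs at most once in R and every node occurs at most once in ⟦g⟧_{Γ,μ}. Then, as an identity of generalized multisets, D(⟦g⟧_{Γ,μ}) ⊖ D(R) = {| N' ↦ 1 : (g', N') ∈ GP(g, Γ, μ) |} ⊖ {| N' ↦ 1 : (q', N') ∈ MP(m, R) |}. -/
import Mathlib


open Classical
noncomputable section

/-! ### Abstract syntax trees -/

/-- An AST node: a label, an attribute map, and a list of children.  The type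
`Attr` stands for the finite partial attribute maps `Σ_M ⇀ 𝔻`. -/
inductive ASTNode (L : Type) (Attr : Type) : Type where
  | mk : L → Attr → List (ASTNode L Attr) → ASTNode L Attr

namespace ASTNode

variable {L Attr : Type}

def label : ASTNode L Attr → L
  | .mk ℓ _ _ => ℓ

def attrs : ASTNode L Attr → Attr
  | .mk _ A _ => A

def children : ASTNode L Attr → List (ASTNode L Attr)
  | .mk _ _ ns => ns

end ASTNode

/-! ### Scopes -/

/-- A scope: a partial map from node variables to attribute maps. -/
def Scope (I : Type) (Attr : Type) := I → Option Attr

def emptyScope {I Attr : Type} : Scope I Attr := fun _ => none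

/-- Left-biased union of scopes. -/
def Scope.union {I Attr : Type} (Γ₁ Γ₂ : Scope I Attr) : Scope I Attr :=
  fun i => (Γ₁ i).orElse (fun _ => Γ₂ i)

/-- `{i ↦ A} ∪ Γ`. -/
def Scope.insert {I Attr : Type} (i : I) (A : Attr) (Γ : Scope I Attr) : Scope I Attr :=
  fun j => if j = i then some A else Γ j

/-! ### Pattern queries -/

/-- Pattern queries: `AnyNode`, or `Match(ℓ, i, [q₁,…,qₙ], θ)` with `θ` a Boolean
predicate on scopes. -/
inductive Pattern (L : Type) (Attr : Type) (I : Type) : Type where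
  | any : Pattern L Attr I
  | node : L → I → List (Pattern L Attr I) → (Scope I Attr → Bool) → Pattern L Attr I

variable {L Attr I : Type}

mutual
/-- Pattern evaluation `⟦q(N)⟧`, returning a Boolean and a scope. -/
def evalPattern : Pattern L Attr I → ASTNode L Attr → Bool × Scope I Attr
  | .any, _ => (true, emptyScope)
  | .node ℓq i qs θ, .mk ℓ A ns =>
      match evalChildren qs ns with
      | none => (false, emptyScope)
      | some Γc =>
          let Γ : Scope I Attr := Scope.insert i A Γc
          if ℓq = ℓ ∧ θ Γ = true then (true, Γ) else (false, emptyScope)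

/-- Evaluate the children: succeeds (returning the union of the child scopes)
iff the lists have equal length and every child pattern matches. -/
def evalChildren : List (Pattern L Attr I) → List (ASTNode L Attr) → Option (Scope I Attr)
  | [], [] => some emptyScope
  | q :: qs, n :: ns =>
      match evalPattern q n, evalChildren qs ns with
      | (true, Γ₁), some Γ₂ => some (Γ₁.union Γ₂)
      | _, _ => none
  | _, _ => none
end

mutual
/-- The descendants `D(N)` of a node (as a list). -/
def ASTNode.descendants : ASTNode L Attr → List (ASTNode L Attr)
  | .mk ℓ A ns => .mk ℓ A ns :: descendantsList ns

def descendantsList : List (ASTNode L Attr) → List (ASTNode L Attr)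
  | [] => []
  | n :: ns => n.descendants ++ descendantsList ns
end

/-- The match set `q(N)`: descendants of `N` on which `q` evaluates to true. -/
def matchSet (q : Pattern L Attr I) (N : ASTNode L Attr) : Set (ASTNode L Attr) :=
  {N' | N' ∈ N.descendants ∧ ∃ Γ, evalPattern q N' = (true, Γ)}

/-! ### Generalized multisets -/

/-- Lift a list (in particular, a set given as a duplicate-free list) to the
generalized multiset counting occurrences. -/
def listGM (l : List (ASTNode L Attr)) : ASTNode L Attr →₀ ℤ :=
  (l.map (fun x => Finsupp.single x (1 : ℤ))).sum

/-- A view `V_q` is correct for `N` if it maps elements of `q(N)` to `1` and all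
other nodes to `0`. -/
def CorrectView (q : Pattern L Attr I) (N : ASTNode L Attr) (V : ASTNode L Attr →₀ ℤ) : Prop :=
  ∀ x, V x = if x ∈ matchSet q N then 1 else 0

/-- `IVM(q, V, Δ)`: add `Δ(x)` to `V(x)` at every `x` on which `q` evaluates to true. -/
def IVM (q : Pattern L Attr I) (V Δ : ASTNode L Attr →₀ ℤ) : ASTNode L Attr →₀ ℤ :=
  V + Δ.filter (fun x => (evalPattern q x).1 = true)

/-! ### Replacement, depth, ancestors -/

mutual
/-- The replacement `N[R\R']`. -/
def ASTNode.repl (R R' : ASTNode L Attr) : ASTNode L Attr → ASTNode L Attr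
  | .mk ℓ A ns =>
      if ASTNode.mk ℓ A ns = R then R' else .mk ℓ A (replList R R' ns)

def replList (R R' : ASTNode L Attr) : List (ASTNode L Attr) → List (ASTNode L Attr)
  | [] => []
  | n :: ns => ASTNode.repl R R' n :: replList R R' ns
end

mutual
/-- The depth `dep(q)` of a pattern. -/
def Pattern.depth : Pattern L Attr I → ℕ
  | .any => 0
  | .node _ _ qs _ => 1 + depthList qs

def depthList : List (Pattern L Attr I) → ℕ
  | [] => 0
  | q :: qs => max q.depth (depthList qs)
end

/-- `descAt d N M`: `M` is a descendant of `N` at distance exactly `d`. -/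
def descAt : ℕ → ASTNode L Attr → ASTNode L Attr → Prop
  | 0, N, M => N = M
  | d + 1, N, M => ∃ c ∈ N.children, descAt d c M

/-- The generalized multiset `{| Aⁱ(R) ↦ 1 : 1 ≤ i ≤ d, Aⁱ(R) exists relative to N |}`
of ancestors of `R` (in `N`) at distances `1,…,d`. -/
def ancestorsGM (N R : ASTNode L Attr) (d : ℕ) : ASTNode L Attr →₀ ℤ :=
  ∑ i ∈ Finset.Icc 1 d, listGM (N.descendants.filter (fun A => decide (descAt i A R)))

/-- The maximal search set `⌈R, R'⌉_q` (ancestors of `R` are taken in `N`,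
ancestors of `R'` in `N[R\R']`). -/
def maxSearchSet (q : Pattern L Attr I) (N R R' : ASTNode L Attr) : ASTNode L Attr →₀ ℤ :=
  listGM R.descendants + ancestorsGM N R q.depth
    - listGM R'.descendants - ancestorsGM (N.repl R R') R' q.depth

/-! ### Node generators -/

/-- Node generators: `Reuse(i)` or `Gen(ℓ, ā, [g₁,…,gₙ])`, where the attribute
expressions `ā` are collectively a function from scopes to attribute maps. -/
inductive NodeGen (L : Type) (Attr : Type) (I : Type) : Type where
  | reuse : I → NodeGen L Attr I
  | gen : L → (Scope I Attr → Attr) → List (NodeGen L Attr I) → NodeGen L Attr I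

mutual
/-- Generator evaluation `⟦g⟧_{Γ,μ}`. -/
def evalGen (Γ : Scope I Attr) (μ : I → ASTNode L Attr) : NodeGen L Attr I → ASTNode L Attr
  | .reuse i => μ i
  | .gen ℓ a gs => .mk ℓ (a Γ) (evalGenList Γ μ gs)

def evalGenList (Γ : Scope I Attr) (μ : I → ASTNode L Attr) :
    List (NodeGen L Attr I) → List (ASTNode L Attr)
  | [] => []
  | g :: gs => evalGen Γ μ g :: evalGenList Γ μ gs
end

mutual
/-- The matched node pairs `MP(q, R)`. -/
def MP : Pattern L Attr I → ASTNode L Attr → List (Pattern L Attr I × ASTNode L Attr)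
  | .any, R => [(.any, R)]
  | .node ℓ i qs θ, .mk ℓ' A ns => (.node ℓ i qs θ, .mk ℓ' A ns) :: MPList qs ns

def MPList : List (Pattern L Attr I) → List (ASTNode L Attr) →
    List (Pattern L Attr I × ASTNode L Attr)
  | q :: qs, n :: ns => MP q n ++ MPList qs ns
  | _, _ => []
end

mutual
/-- The generated node pairs `GP(g, Γ, μ)`. -/
def GP (Γ : Scope I Attr) (μ : I → ASTNode L Attr) :
    NodeGen L Attr I → List (NodeGen L Attr I × ASTNode L Attr)
  | .reuse i => [(.reuse i, μ i)]
  | .gen ℓ a gs => (.gen ℓ a gs, evalGen Γ μ (.gen ℓ a gs)) :: GPList Γ μ gs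

def GPList (Γ : Scope I Attr) (μ : I → ASTNode L Attr) :
    List (NodeGen L Attr I) → List (NodeGen L Attr I × ASTNode L Attr)
  | [] => []
  | g :: gs => GP Γ μ g ++ GPList Γ μ gs
end

/-- A generator `g` is safe for `(q, R)` with scopes `Γ, μ`: it reuses exactly
the wildcard-matched subtrees of `R`. -/
def SafeGen (q : Pattern L Attr I) (R : ASTNode L Attr) (g : NodeGen L Attr I)
    (Γ : Scope I Attr) (μ : I → ASTNode L Attr) : Prop :=
  ∀ N : ASTNode L Attr,
    (Pattern.any, N) ∈ MP q R ↔ ∃ i, μ i = N ∧ (NodeGen.reuse i, N) ∈ GP Γ μ g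

mutual
/-- `|g|`: the number of `Gen` and `Reuse` terms in `g`. -/
def NodeGen.size : NodeGen L Attr I → ℕ
  | .reuse _ => 1
  | .gen _ _ gs => 1 + sizeGenList gs

def sizeGenList : List (NodeGen L Attr I) → ℕ
  | [] => 0
  | g :: gs => g.size + sizeGenList gs
end

mutual
/-- `|q|`: the number of `Match` and `AnyNode` terms in `q`. -/
def Pattern.size : Pattern L Attr I → ℕ
  | .any => 1
  | .node _ _ qs _ => 1 + sizePatList qs

def sizePatList : List (Pattern L Attr I) → ℕ
  | [] => 0
  | q :: qs => q.size + sizePatList qs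
end

/-! ### Paths, occurrences, alignment -/

/-- The node reached from `N` by following the child-index path `π`. -/
def nodeAt (N : ASTNode L Attr) (π : List ℕ) : Option (ASTNode L Attr) :=
  match π with
  | [] => some N
  | k :: π' => (N.children[k]?).bind fun c => nodeAt c π'

/-- The subpattern occurrence of `q` located at the child-index path `π`. -/
def subAt (q : Pattern L Attr I) (π : List ℕ) : Option (Pattern L Attr I) :=
  match π, q with
  | [], q => some q
  | _ :: _, .any => none
  | k :: π', .node _ _ qs _ => (qs[k]?).bind fun qk => subAt qk π'

/-- `π` is an occurrence of a `Match` subpattern with node variable `i`. -/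
def IsMatchVarOcc (q : Pattern L Attr I) (π : List ℕ) (i : I) : Prop :=
  ∃ ℓ qs θ, subAt q π = some (.node ℓ i qs θ)

/-- `π` is an occurrence of a `Match` subpattern of `q`. -/
def IsMatchOcc (q : Pattern L Attr I) (π : List ℕ) : Prop :=
  ∃ i, IsMatchVarOcc q π i

/-- The node variables of the `Match` subpatterns of `q`. -/
def patVars (q : Pattern L Attr I) : Set I :=
  {i | ∃ π, IsMatchVarOcc q π i}

/-- The scope `Γ_σ` induced by an assignment `σ` of nodes to (paths of)
`Match`-subpattern occurrences of `q`: it maps the node variable of each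
`Match` subpattern to the attribute map of the assigned node. -/
def scopeOf (q : Pattern L Attr I) (σ : List ℕ → ASTNode L Attr) : Scope I Attr :=
  fun i => if h : ∃ π, IsMatchVarOcc q π i then some (σ h.choose).attrs else none

mutual
/-- Structural alignment at depth 0. -/
def align0 : Pattern L Attr I → NodeGen L Attr I → Bool
  | .any, _ => true
  | _, .reuse _ => true
  | .node ℓ _ qs _, .gen ℓ' _ gs =>
      if ℓ = ℓ' ∧ qs.length = gs.length then align0List qs gs else false

def align0List : List (Pattern L Attr I) → List (NodeGen L Attr I) → Bool
  | [], [] => true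
  | q :: qs, g :: gs => align0 q g && align0List qs gs
  | _, _ => false
end

/-- Structural alignment at depth `d`. -/
def alignD : ℕ → Pattern L Attr I → NodeGen L Attr I → Bool
  | 0, q, g => align0 q g
  | _ + 1, .any, _ => false
  | d + 1, .node _ _ qs _, g => qs.attach.any (fun qk => alignD d qk.1 g)

end


/-! ### Auxiliary development for the proof -/

section AuxProof

variable {L Attr I : Type}

theorem listGM_nil : listGM ([] : List (ASTNode L Attr)) = 0 := rfl

theorem listGM_cons (a : ASTNode L Attr) (l : List (ASTNode L Attr)) :
    listGM (a :: l) = Finsupp.single a 1 + listGM l := by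
  simp [listGM]

theorem listGM_append (l₁ l₂ : List (ASTNode L Attr)) :
    listGM (l₁ ++ l₂) = listGM l₁ + listGM l₂ := by
  simp [listGM]

theorem listGM_perm {l₁ l₂ : List (ASTNode L Attr)} (h : l₁.Perm l₂) :
    listGM l₁ = listGM l₂ :=
  (h.map _).sum_eq

theorem subperm_append' {α} {a b c d : List α} (h1 : a.Subperm c) (h2 : b.Subperm d) :
    (a ++ b).Subperm (c ++ d) := by
  obtain ⟨l1, p1, s1⟩ := h1; obtain ⟨l2, p2, s2⟩ := h2
  exact ⟨l1 ++ l2, p1.append p2, s1.append s2⟩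

theorem subperm_nodup' {α} {a b : List α} (h : a.Subperm b) (hb : b.Nodup) : a.Nodup := by
  obtain ⟨l, p, s⟩ := h; exact p.nodup_iff.mp (s.nodup hb)

mutual
def reuseNodes (μ : I → ASTNode L Attr) : NodeGen L Attr I → List (ASTNode L Attr)
  | .reuse i => [μ i]
  | .gen _ _ gs => reuseNodesList μ gs

def reuseNodesList (μ : I → ASTNode L Attr) :
    List (NodeGen L Attr I) → List (ASTNode L Attr)
  | [] => []
  | g :: gs => reuseNodes μ g ++ reuseNodesList μ gs
end

mutual
def anyNodes : Pattern L Attr I → ASTNode L Attr → List (ASTNode L Attr)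
  | .any, R => [R]
  | .node _ _ qs _, .mk _ _ ns => anyNodesList qs ns

def anyNodesList : List (Pattern L Attr I) → List (ASTNode L Attr) → List (ASTNode L Attr)
  | q :: qs, n :: ns => anyNodes q n ++ anyNodesList qs ns
  | _, _ => []
end

mutual
theorem gen_delta (Γ : Scope I Attr) (μ : I → ASTNode L Attr) (g : NodeGen L Attr I) :
    listGM (evalGen Γ μ g).descendants + listGM (reuseNodes μ g) =
      listGM ((GP Γ μ g).map Prod.snd)
        + listGM ((reuseNodes μ g).flatMap ASTNode.descendants) := by
  cases g with
  | reuse i =>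
      simp [evalGen, reuseNodes, GP, listGM_cons, listGM_append, listGM_nil]
      abel
  | gen ℓ a gs =>
      have h := gen_delta_list Γ μ gs
      simp only [evalGen, reuseNodes, GP, ASTNode.descendants, listGM_cons, List.map_cons] at *
      rw [add_assoc, add_assoc, h]

theorem gen_delta_list (Γ : Scope I Attr) (μ : I → ASTNode L Attr)
    (gs : List (NodeGen L Attr I)) :
    listGM (descendantsList (evalGenList Γ μ gs)) + listGM (reuseNodesList μ gs) =
      listGM ((GPList Γ μ gs).map Prod.snd)
        + listGM ((reuseNodesList μ gs).flatMap ASTNode.descendants) := by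
  cases gs with
  | nil => simp [evalGenList, descendantsList, reuseNodesList, GPList, listGM_nil]
  | cons g gs =>
      have h1 := gen_delta Γ μ g
      have h2 := gen_delta_list Γ μ gs
      simp only [evalGenList, descendantsList, reuseNodesList, GPList, List.map_append,
        List.flatMap_append, listGM_append]
      rw [add_add_add_comm, h1, h2, add_add_add_comm]
end

mutual
theorem pat_delta (m : Pattern L Attr I) (R : ASTNode L Attr) (Γ₀ : Scope I Attr)
    (hm : evalPattern m R = (true, Γ₀)) :
    listGM R.descendants + listGM (anyNodes m R) =
      listGM ((MP m R).map Prod.snd)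
        + listGM ((anyNodes m R).flatMap ASTNode.descendants) := by
  cases m with
  | any =>
      simp [anyNodes, MP, listGM_cons, listGM_nil]
      abel
  | node ℓq i qs θ =>
      cases R with
      | mk ℓ A ns =>
        obtain ⟨Γc, hc⟩ : ∃ Γc, evalChildren qs ns = some Γc := by
          rw [evalPattern] at hm
          cases hcc : evalChildren qs ns with
          | none => rw [hcc] at hm; simp at hm
          | some Γc => exact ⟨Γc, rfl⟩
        have h := pat_delta_list qs ns Γc hc
        simp only [anyNodes, MP, ASTNode.descendants, listGM_cons, List.map_cons] at *
        rw [add_assoc, add_assoc, h]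

theorem pat_delta_list (qs : List (Pattern L Attr I)) (ns : List (ASTNode L Attr))
    (Γc : Scope I Attr) (hc : evalChildren qs ns = some Γc) :
    listGM (descendantsList ns) + listGM (anyNodesList qs ns) =
      listGM ((MPList qs ns).map Prod.snd)
        + listGM ((anyNodesList qs ns).flatMap ASTNode.descendants) := by
  match qs, ns with
  | [], [] => simp [descendantsList, anyNodesList, MPList, listGM_nil]
  | [], _ :: _ => simp [evalChildren] at hc
  | _ :: _, [] => simp [evalChildren] at hc
  | q :: qs, n :: ns =>
      rw [evalChildren] at hc
      match hp : evalPattern q n, hcs : evalChildren qs ns with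
      | (true, Γ₁), some Γ₂ =>
          have h1 := pat_delta q n Γ₁ hp
          have h2 := pat_delta_list qs ns Γ₂ hcs
          simp only [descendantsList, anyNodesList, MPList, List.map_append,
            List.flatMap_append, listGM_append]
          rw [add_add_add_comm, h1, h2, add_add_add_comm]
      | (true, Γ₁), none => rw [hp, hcs] at hc; simp at hc
      | (false, Γ₁), some Γ₂ => rw [hp, hcs] at hc; simp at hc
      | (false, Γ₁), none => rw [hp, hcs] at hc; simp at hc
end

mutual
theorem mem_anyNodes (m : Pattern L Attr I) (R N : ASTNode L Attr) :
    (Pattern.any, N) ∈ MP m R ↔ N ∈ anyNodes m R := by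
  cases m with
  | any => simp [MP, anyNodes]
  | node ℓq i qs θ =>
      cases R with
      | mk ℓ A ns =>
        rw [MP, anyNodes]
        simp only [List.mem_cons, Prod.mk.injEq]
        rw [mem_anyNodesList qs ns N]
        simp

theorem mem_anyNodesList (qs : List (Pattern L Attr I)) (ns : List (ASTNode L Attr))
    (N : ASTNode L Attr) :
    (Pattern.any, N) ∈ MPList qs ns ↔ N ∈ anyNodesList qs ns := by
  match qs, ns with
  | [], [] => simp [MPList, anyNodesList]
  | [], _ :: _ => simp [MPList, anyNodesList]
  | _ :: _, [] => simp [MPList, anyNodesList]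
  | q :: qs, n :: ns =>
      rw [MPList, anyNodesList]
      simp only [List.mem_append]
      rw [mem_anyNodes q n N, mem_anyNodesList qs ns N]
end

mutual
theorem mem_reuseNodes (Γ : Scope I Attr) (μ : I → ASTNode L Attr) (g : NodeGen L Attr I)
    (N : ASTNode L Attr) :
    (∃ i, μ i = N ∧ (NodeGen.reuse i, N) ∈ GP Γ μ g) ↔ N ∈ reuseNodes μ g := by
  cases g with
  | reuse j =>
      simp only [GP, reuseNodes, List.mem_singleton, Prod.mk.injEq, NodeGen.reuse.injEq]
      constructor
      · rintro ⟨i, h1, h2, h3⟩; exact h3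
      · intro h; exact ⟨j, h.symm, rfl, h⟩
  | gen ℓ a gs =>
      rw [GP, reuseNodes]
      simp only [List.mem_cons, Prod.mk.injEq]
      rw [← mem_reuseNodesList Γ μ gs N]
      constructor
      · rintro ⟨i, h1, h2⟩
        rcases h2 with ⟨h2, -⟩ | h2
        · exact absurd h2 (by simp)
        · exact ⟨i, h1, h2⟩
      · rintro ⟨i, h1, h2⟩; exact ⟨i, h1, Or.inr h2⟩

theorem mem_reuseNodesList (Γ : Scope I Attr) (μ : I → ASTNode L Attr)
    (gs : List (NodeGen L Attr I)) (N : ASTNode L Attr) :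
    (∃ i, μ i = N ∧ (NodeGen.reuse i, N) ∈ GPList Γ μ gs) ↔ N ∈ reuseNodesList μ gs := by
  match gs with
  | [] => simp [GPList, reuseNodesList]
  | g :: gs =>
      rw [GPList, reuseNodesList]
      simp only [List.mem_append]
      rw [← mem_reuseNodes Γ μ g N, ← mem_reuseNodesList Γ μ gs N]
      constructor
      · rintro ⟨i, h1, h2 | h2⟩
        · exact Or.inl ⟨i, h1, h2⟩
        · exact Or.inr ⟨i, h1, h2⟩
      · rintro (⟨i, h1, h2⟩ | ⟨i, h1, h2⟩)
        · exact ⟨i, h1, Or.inl h2⟩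
        · exact ⟨i, h1, Or.inr h2⟩
end

mutual
theorem anyNodes_subperm (m : Pattern L Attr I) (R : ASTNode L Attr) :
    (anyNodes m R).Subperm R.descendants := by
  cases m with
  | any =>
      cases R with
      | mk ℓ A ns =>
        rw [anyNodes, ASTNode.descendants]
        exact ((List.nil_sublist _).cons₂ _).subperm
  | node ℓq i qs θ =>
      cases R with
      | mk ℓ A ns =>
        rw [anyNodes, ASTNode.descendants]
        exact (anyNodesList_subperm qs ns).trans (List.sublist_cons_self _ _).subperm

theorem anyNodesList_subperm (qs : List (Pattern L Attr I)) (ns : List (ASTNode L Attr)) :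
    (anyNodesList qs ns).Subperm (descendantsList ns) := by
  match qs, ns with
  | [], [] => simp only [anyNodesList]; exact List.nil_subperm
  | [], _ :: _ => simp only [anyNodesList]; exact List.nil_subperm
  | _ :: _, [] => simp only [anyNodesList]; exact List.nil_subperm
  | q :: qs, n :: ns =>
      rw [anyNodesList, descendantsList]
      exact subperm_append' (anyNodes_subperm q n) (anyNodesList_subperm qs ns)
end

mutual
theorem reuseNodes_subperm (Γ : Scope I Attr) (μ : I → ASTNode L Attr)
    (g : NodeGen L Attr I) :
    (reuseNodes μ g).Subperm (evalGen Γ μ g).descendants := by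
  cases g with
  | reuse i =>
      rw [reuseNodes, evalGen]
      cases h : μ i with
      | mk ℓ A ns =>
        rw [ASTNode.descendants]
        exact ((List.nil_sublist _).cons₂ _).subperm
  | gen ℓ a gs =>
      rw [reuseNodes, evalGen, ASTNode.descendants]
      exact (reuseNodesList_subperm Γ μ gs).trans (List.sublist_cons_self _ _).subperm

theorem reuseNodesList_subperm (Γ : Scope I Attr) (μ : I → ASTNode L Attr)
    (gs : List (NodeGen L Attr I)) :
    (reuseNodesList μ gs).Subperm (descendantsList (evalGenList Γ μ gs)) := by
  match gs with
  | [] => simp only [reuseNodesList]; exact List.nil_subperm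
  | g :: gs =>
      rw [reuseNodesList, evalGenList, descendantsList]
      exact subperm_append' (reuseNodes_subperm Γ μ g) (reuseNodesList_subperm Γ μ gs)
end

end AuxProof

/-- **Update delta for safe generators.** If `⟦m(R)⟧ = (⊤, Γ₀)`,
`g` is safe for `(m, R)` with scopes `Γ, μ`, every node occurs at most once in
`R` and at most once in `⟦g⟧_{Γ,μ}`, then
`D(⟦g⟧_{Γ,μ}) ⊖ D(R) = {| N' ↦ 1 : (g', N') ∈ GP(g,Γ,μ) |} ⊖ {| N' ↦ 1 : (q', N') ∈ MP(m,R) |}`. -/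
theorem safe_generator_delta {L Attr I : Type}
    (m : Pattern L Attr I) (R : ASTNode L Attr)
    (g : NodeGen L Attr I) (Γ : Scope I Attr) (μ : I → ASTNode L Attr)
    (Γ₀ : Scope I Attr) (hm : evalPattern m R = (true, Γ₀))
    (hsafe : SafeGen m R g Γ μ)
    (hR : R.descendants.Nodup)
    (hg : (evalGen Γ μ g).descendants.Nodup) :
    listGM (evalGen Γ μ g).descendants - listGM R.descendants =
      listGM ((GP Γ μ g).map Prod.snd) - listGM ((MP m R).map Prod.snd) := by
  have hnodupA : (anyNodes m R).Nodup := subperm_nodup' (anyNodes_subperm m R) hR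
  have hnodupRe : (reuseNodes μ g).Nodup := subperm_nodup' (reuseNodes_subperm Γ μ g) hg
  have hperm : (anyNodes m R).Perm (reuseNodes μ g) := by
    rw [List.perm_ext_iff_of_nodup hnodupA hnodupRe]
    intro N
    rw [← mem_anyNodes, ← mem_reuseNodes Γ μ g N]
    exact hsafe N
  have hN : listGM (anyNodes m R) = listGM (reuseNodes μ g) := listGM_perm hperm
  have hB : listGM ((anyNodes m R).flatMap ASTNode.descendants)
      = listGM ((reuseNodes μ g).flatMap ASTNode.descendants) :=
    listGM_perm (hperm.flatMap_right _)
  have h1 : listGM (evalGen Γ μ g).descendants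
      = listGM ((GP Γ μ g).map Prod.snd)
        + listGM ((reuseNodes μ g).flatMap ASTNode.descendants)
        - listGM (reuseNodes μ g) := by
    rw [eq_sub_iff_add_eq]; exact gen_delta Γ μ g
  have h2 : listGM R.descendants
      = listGM ((MP m R).map Prod.snd)
        + listGM ((anyNodes m R).flatMap ASTNode.descendants)
        - listGM (anyNodes m R) := by
    rw [eq_sub_iff_add_eq]; exact pat_delta m R Γ₀ hm
  rw [h1, h2, hN, hB]
  abel
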